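/- arXiv:1601.03019 — 3 statements merged into one kernel-verified Lean document; each statement's English description precedes it below -/
import Mathlib

section
/- For every ε > 0 define the truncated fractional p-Laplacian (−Δ_p)_ε^s u(x) := ∫_{{y : |x−y| > ε}} |u(x)−u(y)|^{p−2}(u(x)−u(y)) / |x−y|^{n+sp} dy. Then for every u ∈ W^{s,p}(ℝⁿ) the function (−Δ_p)_ε^s u belongs to L^{p'}(ℝⁿ), where p' = p/(p−1), and ‖(−Δ_p)_ε^s u‖_{L^{p'}(ℝⁿ)} ≤ (n ω_n / (sp))^{1/p} · ε^{−s} · [u]_{s,p}^{p/p'}, where ω_n denotes the Lebesgue measure of the unit ball of ℝⁿ. -/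
open MeasureTheory Real Filter Metric Bornology

noncomputable section

abbrev Rn (n : ℕ) : Type := EuclideanSpace ℝ (Fin n)

/-- The `p`-th power of the Gagliardo seminorm, `[u]_{s,p}^p`. -/
def gagE (n : ℕ) (s p : ℝ) (u : Rn n → ℝ) : ℝ :=
  ∫ z : Rn n × Rn n, |u z.1 - u z.2| ^ p / ‖z.1 - z.2‖ ^ ((n : ℝ) + s * p)

/-- The Gagliardo seminorm `[u]_{s,p}`. -/
def gagSemi (n : ℕ) (s p : ℝ) (u : Rn n → ℝ) : ℝ := gagE n s p u ^ (1 / p)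

/-- The `L^p(ℝⁿ)` norm. -/
def lpNorm (n : ℕ) (p : ℝ) (u : Rn n → ℝ) : ℝ := (∫ x, |u x| ^ p) ^ (1 / p)

/-- The `L^q(A)` norm. -/
def lqNormOn (n : ℕ) (q : ℝ) (A : Set (Rn n)) (V : Rn n → ℝ) : ℝ :=
  (∫ x in A, |V x| ^ q) ^ (1 / q)

/-- Membership in `W^{s,p}(ℝⁿ)`: `u ∈ L^p(ℝⁿ)` and the Gagliardo energy is finite. -/
def memW (n : ℕ) (s p : ℝ) (u : Rn n → ℝ) : Prop :=
  MemLp u (ENNReal.ofReal p) volume ∧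
    Integrable (fun z : Rn n × Rn n =>
      |u z.1 - u z.2| ^ p / ‖z.1 - z.2‖ ^ ((n : ℝ) + s * p)) volume

/-- Membership in `W̃^{s,p}(Ω)`: members of `W^{s,p}(ℝⁿ)` vanishing (a.e.) outside `Ω`. -/
def memWt (n : ℕ) (s p : ℝ) (Ω : Set (Rn n)) (u : Rn n → ℝ) : Prop :=
  memW n s p u ∧ ∀ᵐ x ∂(volume : Measure (Rn n)), x ∉ Ω → u x = 0

/-- The form `H(u,v)`. -/
def Hform (n : ℕ) (s p : ℝ) (u v : Rn n → ℝ) : ℝ :=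
  (1 / 2) * ∫ z : Rn n × Rn n,
    |u z.1 - u z.2| ^ (p - 2) * (u z.1 - u z.2) * (v z.1 - v z.2) /
      ‖z.1 - z.2‖ ^ ((n : ℝ) + s * p)

/-- The first eigenvalue `λ(V)`. -/
def lam1 (n : ℕ) (s p : ℝ) (Ω : Set (Rn n)) (V : Rn n → ℝ) : ℝ :=
  sInf { r : ℝ | ∃ u : Rn n → ℝ, memWt n s p Ω u ∧ lpNorm n p u = 1 ∧
    r = (1 / 2) * gagE n s p u + ∫ x in Ω, V x * |u x| ^ p }

/-- `lam` is an eigenvalue with eigenfunction `u`. -/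
def IsEigen (n : ℕ) (s p : ℝ) (Ω : Set (Rn n)) (V : Rn n → ℝ) (lam : ℝ)
    (u : Rn n → ℝ) : Prop :=
  memWt n s p Ω u ∧ ¬ (u =ᵐ[(volume : Measure (Rn n))] 0) ∧
    ∀ v : Rn n → ℝ, memWt n s p Ω v →
      Hform n s p u v + ∫ x in Ω, V x * |u x| ^ (p - 2) * u x * v x
        = lam * ∫ x in Ω, |u x| ^ (p - 2) * u x * v x

/-- `u` is a weak super-solution of `(-Δ_p)^s u + V |u|^{p-2} u = 0` in `Ω`,
`u = 0` outside `Ω`. -/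
def IsSuperSol (n : ℕ) (s p : ℝ) (Ω : Set (Rn n)) (V u : Rn n → ℝ) : Prop :=
  memWt n s p Ω u ∧ ∀ v : Rn n → ℝ, memWt n s p Ω v →
    (∀ᵐ x ∂(volume : Measure (Rn n)), 0 ≤ v x) →
    0 ≤ Hform n s p u v + ∫ x in Ω, V x * |u x| ^ (p - 2) * u x * v x

/-- `u` is the positive eigenfunction associated to `λ(V)`, normalized in `L^p`. -/
def IsPosEigen (n : ℕ) (s p : ℝ) (Ω : Set (Rn n)) (V u : Rn n → ℝ) : Prop :=
  IsEigen n s p Ω V (lam1 n s p Ω V) u ∧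
    (∀ᵐ x ∂((volume : Measure (Rn n)).restrict Ω), 0 < u x) ∧ lpNorm n p u = 1

/-- The truncated fractional `p`-Laplacian `(-Δ_p)^s_ε`. -/
def truncOp (n : ℕ) (s p ε : ℝ) (u : Rn n → ℝ) (x : Rn n) : ℝ :=
  ∫ y in {y : Rn n | ε < ‖x - y‖},
    |u x - u y| ^ (p - 2) * (u x - u y) / ‖x - y‖ ^ ((n : ℝ) + s * p)



open scoped ENNReal NNReal

section Aux

lemma auxIntOn (n : ℕ) (q ε : ℝ) (hq : (n : ℝ) < q) (hε : 0 < ε) :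
    IntegrableOn (fun z : Rn n => (‖z‖ ^ q)⁻¹) {z : Rn n | ε < ‖z‖} volume := by
  have hq0 : 0 < q := lt_of_le_of_lt (Nat.cast_nonneg n) hq
  have hS : MeasurableSet {z : Rn n | ε < ‖z‖} :=
    measurableSet_lt measurable_const measurable_norm
  have hfr : (Module.finrank ℝ (Rn n) : ℝ) < q := by
    rwa [finrank_euclideanSpace, Fintype.card_fin]
  apply Integrable.mono' (((integrable_one_add_norm (E := Rn n) (μ := volume) hfr).const_mul
    ((1 + ε⁻¹) ^ q)).integrableOn (s := {z : Rn n | ε < ‖z‖}))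
  · exact (by fun_prop : Measurable fun z : Rn n => (‖z‖ ^ q)⁻¹).aestronglyMeasurable
  · filter_upwards [ae_restrict_mem hS] with z hz
    have hz0 : 0 < ‖z‖ := hε.trans hz
    have h2 : ‖z‖⁻¹ ≤ (1 + ε⁻¹) * (1 + ‖z‖)⁻¹ := by
      rw [inv_le_iff_one_le_mul₀ hz0]
      rw [mul_comm (1 + ε⁻¹), mul_assoc, ← div_eq_inv_mul, le_div_iff₀ (by positivity)]
      have : 1 ≤ ε⁻¹ * ‖z‖ := by
        rw [← div_eq_inv_mul]; exact (one_le_div hε).2 hz.le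
      nlinarith
    have key : (‖z‖ ^ q)⁻¹ ≤ (1 + ε⁻¹) ^ q * (1 + ‖z‖) ^ (-q) := by
      rw [← Real.inv_rpow hz0.le, Real.rpow_neg (by positivity),
        ← Real.inv_rpow (by positivity), ← Real.mul_rpow (by positivity) (by positivity)]
      exact Real.rpow_le_rpow (by positivity) h2 hq0.le
    have : |(‖z‖ ^ q)⁻¹| = (‖z‖ ^ q)⁻¹ := abs_of_nonneg (by positivity)
    rw [Real.norm_eq_abs, this]
    exact key

lemma auxVal (n : ℕ) (hn : 1 ≤ n) (q ε : ℝ) (hq : (n : ℝ) < q) (hε : 0 < ε) :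
    ∫ z in {z : Rn n | ε < ‖z‖}, (‖z‖ ^ q)⁻¹ =
      (n : ℝ) * (volume (ball (0 : Rn n) 1)).toReal * ε ^ (-(q - n)) / (q - n) := by
  haveI : Nonempty (Fin n) := ⟨⟨0, hn⟩⟩
  haveI : Nontrivial (Rn n) := inferInstance
  have hq0 : 0 < q := lt_of_le_of_lt (Nat.cast_nonneg n) hq
  have hS : MeasurableSet {z : Rn n | ε < ‖z‖} :=
    measurableSet_lt measurable_const measurable_norm
  have hdim : Module.finrank ℝ (Rn n) = n := by
    rw [finrank_euclideanSpace, Fintype.card_fin]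
  set f : ℝ → ℝ := fun t => Set.indicator (Set.Ioi ε) (fun t => (t ^ q)⁻¹) t with hf
  have h1 : ∫ z in {z : Rn n | ε < ‖z‖}, (‖z‖ ^ q)⁻¹ = ∫ z : Rn n, f ‖z‖ := by
    rw [← integral_indicator hS]
    refine integral_congr_ae (Filter.Eventually.of_forall fun z => ?_)
    by_cases h : ε < ‖z‖ <;> simp [hf, Set.indicator, h]
  rw [h1, integral_fun_norm_addHaar volume f, hdim]
  have h2 : ∫ y in Set.Ioi (0:ℝ), y ^ (n - 1) • f y
      = ∫ y in Set.Ioi ε, y ^ ((n:ℝ) - 1 - q) := by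
    have : ∀ y : ℝ, y ^ (n-1) • f y
        = Set.indicator (Set.Ioi ε) (fun y => y ^ (n-1) * (y ^ q)⁻¹) y := by
      intro y
      by_cases h : ε < y <;> simp [hf, Set.indicator, h]
    simp_rw [this]
    rw [setIntegral_indicator measurableSet_Ioi, Set.Ioi_inter_Ioi, max_eq_right hε.le]
    apply setIntegral_congr_fun measurableSet_Ioi
    intro y hy
    show y ^ (n - 1) * (y ^ q)⁻¹ = y ^ ((n:ℝ) - 1 - q)
    rw [← Real.rpow_natCast y (n-1), ← Real.rpow_neg (hε.trans hy).le, ← Real.rpow_add (hε.trans hy)]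
    congr 1
    rw [Nat.cast_sub hn, Nat.cast_one]
    ring
  rw [h2, integral_Ioi_rpow_of_lt (by linarith) hε]
  have e1 : (n:ℝ) - 1 - q + 1 = -(q - n) := by ring
  rw [e1]
  rw [nsmul_eq_mul, smul_eq_mul, neg_div_neg_eq]
  rw [measureReal_def]
  ring

lemma auxKernelL (n : ℕ) (hn : 1 ≤ n) (q ε : ℝ) (hq : (n : ℝ) < q) (hε : 0 < ε) (x : Rn n) :
    ∫⁻ y in {y : Rn n | ε < ‖x - y‖}, ENNReal.ofReal ((‖x - y‖ ^ q)⁻¹) =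
      ENNReal.ofReal ((n : ℝ) * (volume (ball (0 : Rn n) 1)).toReal * ε ^ (-(q - n)) / (q - n)) := by
  have hS : MeasurableSet {z : Rn n | ε < ‖z‖} :=
    measurableSet_lt measurable_const measurable_norm
  have hSx : MeasurableSet {y : Rn n | ε < ‖x - y‖} :=
    measurableSet_lt measurable_const (measurable_const.sub measurable_id).norm
  set g : Rn n → ℝ≥0∞ := fun z => Set.indicator {z : Rn n | ε < ‖z‖}
    (fun z => ENNReal.ofReal ((‖z‖ ^ q)⁻¹)) z with hg
  have hgm : Measurable g := by
    apply Measurable.indicator _ hS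
    exact (by fun_prop : Measurable fun z : Rn n => (‖z‖ ^ q)⁻¹).ennreal_ofReal
  have h1 : ∫⁻ y in {y : Rn n | ε < ‖x - y‖}, ENNReal.ofReal ((‖x - y‖ ^ q)⁻¹)
      = ∫⁻ y, g (x - y) := by
    rw [← lintegral_indicator hSx]
    refine lintegral_congr fun y => ?_
    by_cases h : ε < ‖x - y‖ <;> simp [hg, Set.indicator, h]
  rw [h1, (Measure.measurePreserving_sub_left volume x).lintegral_comp hgm,
    hg, lintegral_indicator hS,
    ← ofReal_integral_eq_lintegral_ofReal (auxIntOn n q ε hq hε)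
      (Filter.Eventually.of_forall fun z => by positivity),
    auxVal n hn q ε hq hε]

end Aux

set_option maxHeartbeats 2000000 in
theorem statement0 (n : ℕ) (hn : 1 ≤ n) (s p : ℝ) (hs : 0 < s) (hs1 : s < 1) (hp : 1 < p)
    (ε : ℝ) (hε : 0 < ε) (u : Rn n → ℝ) (hu : memW n s p u) :
    MemLp (truncOp n s p ε u) (ENNReal.ofReal (p / (p - 1))) volume ∧
    lpNorm n (p / (p - 1)) (truncOp n s p ε u) ≤
      ((n : ℝ) * (volume (ball (0 : Rn n) 1)).toReal / (s * p)) ^ (1 / p) * ε ^ (-s) *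
        gagSemi n s p u ^ (p / (p / (p - 1))) := by
  classical
  set q : ℝ := (n : ℝ) + s * p with hqdef
  set p' : ℝ := p / (p - 1) with hp'def
  have hcon : p.HolderConjugate p' := Real.HolderConjugate.conjExponent hp
  have hp0 : 0 < p := lt_trans one_pos hp
  have hp'0 : 0 < p' := hcon.symm.pos
  have hp'1 : 1 < p' := (hcon.symm : p'.HolderConjugate p).lt
  have hsp : 0 < s * p := mul_pos hs hp0
  have hqn : (n : ℝ) < q := by rw [hqdef]; linarith
  have hqsub : q - (n : ℝ) = s * p := by rw [hqdef]; ring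
  obtain ⟨hu1, hu2⟩ := hu
  set w : Rn n → ℝ := hu1.1.mk u with hwdef
  have hw : u =ᵐ[volume] w := hu1.1.ae_eq_mk
  have hwm : StronglyMeasurable w := hu1.1.stronglyMeasurable_mk
  have hwme : Measurable w := hwm.measurable
  set S : Rn n → Set (Rn n) := fun x => {y : Rn n | ε < ‖x - y‖} with hSdef
  have hSx : ∀ x, MeasurableSet (S x) := fun x =>
    measurableSet_lt measurable_const (measurable_const.sub measurable_id).norm
  set T : Rn n → ℝ := truncOp n s p ε w with hTdef
  set K : ℝ := (n : ℝ) * (volume (ball (0 : Rn n) 1)).toReal * ε ^ (-(q - n)) / (q - n)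
    with hKdef
  have hK0 : 0 ≤ K := by
    rw [hKdef]
    have := ENNReal.toReal_nonneg (a := volume (ball (0 : Rn n) 1))
    have h1 : (0:ℝ) ≤ ε ^ (-(q - (n:ℝ))) := Real.rpow_nonneg hε.le _
    have h2 : (0:ℝ) < q - n := by linarith
    positivity
  set Ki : ℝ≥0∞ := ENNReal.ofReal K with hKidef
  have hKitop : Ki ≠ ⊤ := ENNReal.ofReal_ne_top
  have hKx : ∀ x : Rn n, ∫⁻ y in S x, ENNReal.ofReal ((‖x - y‖ ^ q)⁻¹) = Ki := fun x =>
    auxKernelL n hn q ε hqn hε x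
  set G : Rn n → ℝ≥0∞ :=
    fun x => ∫⁻ y in S x, ENNReal.ofReal (|w x - w y| ^ p / ‖x - y‖ ^ q) with hGdef
  set Φ : Rn n × Rn n → ℝ≥0∞ :=
    fun z => ENNReal.ofReal (|w z.1 - w z.2| ^ p / ‖z.1 - z.2‖ ^ q) with hΦdef
  have hΦm : Measurable Φ := by
    apply Measurable.ennreal_ofReal
    fun_prop
  -- the energy identity
  have hA : volume {a : Rn n | u a ≠ w a} = 0 := by
    have h := hw
    rwa [Filter.EventuallyEq, ae_iff] at h
  have h1 : (fun z : Rn n × Rn n => |u z.1 - u z.2| ^ p / ‖z.1 - z.2‖ ^ q)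
      =ᵐ[volume] (fun z => |w z.1 - w z.2| ^ p / ‖z.1 - z.2‖ ^ q) := by
    have hN : volume ({a : Rn n | u a ≠ w a} ×ˢ (Set.univ : Set (Rn n))
        ∪ (Set.univ : Set (Rn n)) ×ˢ {a : Rn n | u a ≠ w a}) = 0 := by
      apply measure_union_null
      · rw [Measure.volume_eq_prod, Measure.prod_prod, hA, zero_mul]
      · rw [Measure.volume_eq_prod, Measure.prod_prod, hA, mul_zero]
    rw [Filter.EventuallyEq, ae_iff]
    refine measure_mono_null ?_ hN
    intro z hz
    simp only [Set.mem_setOf_eq] at hz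
    simp only [Set.mem_union, Set.mem_prod, Set.mem_setOf_eq, Set.mem_univ, and_true, true_and]
    by_contra hc
    push_neg at hc
    exact hz (by rw [hc.1, hc.2])
  have hIw : Integrable (fun z : Rn n × Rn n =>
      |w z.1 - w z.2| ^ p / ‖z.1 - z.2‖ ^ q) volume := hu2.congr h1
  have hEq : ∫⁻ z, Φ z = ENNReal.ofReal (gagE n s p u) := by
    have h2 := ofReal_integral_eq_lintegral_ofReal hIw
      (Filter.Eventually.of_forall fun z => by positivity)
    rw [hΦdef]
    rw [← h2]
    congr 1
    rw [show gagE n s p u = ∫ z : Rn n × Rn n, |u z.1 - u z.2| ^ p / ‖z.1 - z.2‖ ^ q from rfl]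
    exact integral_congr_ae h1.symm
  -- a.e. equality of the truncated operators
  have hTu : truncOp n s p ε u =ᵐ[volume] T := by
    filter_upwards [hw] with x hx
    refine integral_congr_ae (ae_restrict_of_ae (hw.mono fun y hy => ?_))
    simp only [hx, hy]
  -- pointwise bound
  have habs : ∀ a : ℝ, |a| ^ (p - 2) * |a| = |a| ^ (p - 1) := by
    intro a
    rcases eq_or_ne a 0 with rfl | ha
    · rw [abs_zero, Real.zero_rpow (by linarith : p - 1 ≠ 0), mul_zero]
    · have h3 : |a| ^ (p - 2) * |a| ^ (1 : ℝ) = |a| ^ (p - 2 + 1) :=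
        (Real.rpow_add (abs_pos.2 ha) _ _).symm
      rw [Real.rpow_one] at h3
      rw [h3]
      congr 1
      ring
  have hps : ∀ z : ℝ≥0∞, (z ^ (1 / p')) ^ p' = z := fun z => by
    rw [← ENNReal.rpow_mul, one_div, inv_mul_cancel₀ hp'0.ne', ENNReal.rpow_one]
  have hpp : ∀ z : ℝ≥0∞, (z ^ (1 / p)) ^ p = z := fun z => by
    rw [← ENNReal.rpow_mul, one_div, inv_mul_cancel₀ hp0.ne', ENNReal.rpow_one]
  have bpt : ∀ x : Rn n, (‖T x‖₊ : ℝ≥0∞) ≤ G x ^ (1 / p') * Ki ^ (1 / p) := by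
    intro x
    have hTx : (‖T x‖₊ : ℝ≥0∞) ≤
        ∫⁻ y in S x, ENNReal.ofReal (|w x - w y| ^ (p - 1) / ‖x - y‖ ^ q) := by
      refine le_trans (enorm_integral_le_lintegral_enorm _) (le_of_eq ?_)
      refine lintegral_congr fun y => ?_
      rw [← ofReal_norm, Real.norm_eq_abs]
      congr 1
      rw [abs_div, abs_of_nonneg (Real.rpow_nonneg (norm_nonneg _) q), abs_mul,
        abs_of_nonneg (Real.rpow_nonneg (abs_nonneg _) _), habs]
    have hpoint : ∀ᵐ y ∂(volume.restrict (S x)),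
        ENNReal.ofReal (|w x - w y| ^ (p - 1) / ‖x - y‖ ^ q)
          = (ENNReal.ofReal (|w x - w y| ^ p / ‖x - y‖ ^ q)) ^ (1 / p')
            * (ENNReal.ofReal ((‖x - y‖ ^ q)⁻¹)) ^ (1 / p) := by
      filter_upwards [ae_restrict_mem (hSx x)] with y hy
      have hxy : 0 < ‖x - y‖ := hε.trans hy
      have hk : 0 < ‖x - y‖ ^ q := Real.rpow_pos_of_pos hxy q
      have ha : (0:ℝ) ≤ |w x - w y| := abs_nonneg _
      rw [ENNReal.ofReal_rpow_of_nonneg (by positivity) (by positivity),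
          ENNReal.ofReal_rpow_of_nonneg (by positivity) (by positivity),
          ← ENNReal.ofReal_mul (by positivity)]
      congr 1
      symm
      have h1 : (|w x - w y| ^ p) ^ (1 / p') = |w x - w y| ^ (p - 1) := by
        rw [← Real.rpow_mul ha, mul_one_div, hcon.div_conj_eq_sub_one]
      have h2 : (‖x - y‖ ^ q) ^ (1 / p') * (‖x - y‖ ^ q) ^ (1 / p) = ‖x - y‖ ^ q := by
        rw [← Real.rpow_add hk]
        have : 1 / p' + 1 / p = 1 := by
          rw [one_div, one_div, add_comm]; exact hcon.inv_add_inv_eq_one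
        rw [this, Real.rpow_one]
      calc (|w x - w y| ^ p / ‖x - y‖ ^ q) ^ (1 / p') * ((‖x - y‖ ^ q)⁻¹) ^ (1 / p)
          = (|w x - w y| ^ p) ^ (1 / p') / (‖x - y‖ ^ q) ^ (1 / p')
            * ((‖x - y‖ ^ q) ^ (1 / p))⁻¹ := by
            rw [Real.div_rpow (by positivity) hk.le, Real.inv_rpow hk.le]
        _ = |w x - w y| ^ (p - 1) / ((‖x - y‖ ^ q) ^ (1 / p') * (‖x - y‖ ^ q) ^ (1 / p)) := by
            rw [h1]; ring
        _ = |w x - w y| ^ (p - 1) / ‖x - y‖ ^ q := by rw [h2]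
    have hf1 : AEMeasurable (fun y : Rn n =>
        (ENNReal.ofReal (|w x - w y| ^ p / ‖x - y‖ ^ q)) ^ (1 / p'))
        (volume.restrict (S x)) := by fun_prop
    have hf2 : AEMeasurable (fun y : Rn n =>
        (ENNReal.ofReal ((‖x - y‖ ^ q)⁻¹)) ^ (1 / p)) (volume.restrict (S x)) := by fun_prop
    calc (‖T x‖₊ : ℝ≥0∞)
        ≤ ∫⁻ y in S x, ENNReal.ofReal (|w x - w y| ^ (p - 1) / ‖x - y‖ ^ q) := hTx
      _ = ∫⁻ y in S x,
            (ENNReal.ofReal (|w x - w y| ^ p / ‖x - y‖ ^ q)) ^ (1 / p')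
            * (ENNReal.ofReal ((‖x - y‖ ^ q)⁻¹)) ^ (1 / p) := lintegral_congr_ae hpoint
      _ ≤ (∫⁻ y in S x, ((ENNReal.ofReal (|w x - w y| ^ p / ‖x - y‖ ^ q)) ^ (1 / p')) ^ p')
            ^ (1 / p') *
          (∫⁻ y in S x, ((ENNReal.ofReal ((‖x - y‖ ^ q)⁻¹)) ^ (1 / p)) ^ p) ^ (1 / p) :=
          ENNReal.lintegral_mul_le_Lp_mul_Lq _ hcon.symm hf1 hf2
      _ = G x ^ (1 / p') * Ki ^ (1 / p) := by
          simp_rw [hps, hpp]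
          rw [hKx x]
  -- Fubini bound
  have hGle : ∫⁻ x, G x ≤ ENNReal.ofReal (gagE n s p u) := by
    calc ∫⁻ x, G x ≤ ∫⁻ x, ∫⁻ y, Φ (x, y) :=
        lintegral_mono fun x => setLIntegral_le_lintegral _ _
      _ = ∫⁻ z, Φ z := by
          rw [show (volume : Measure (Rn n × Rn n))
              = (volume : Measure (Rn n)).prod volume from Measure.volume_eq_prod _ _,
            lintegral_prod _ hΦm.aemeasurable]
      _ = ENNReal.ofReal (gagE n s p u) := hEq
  -- main lintegral bound
  have hmain : ∫⁻ x, (‖T x‖₊ : ℝ≥0∞) ^ p' ≤ Ki ^ (p' / p) * ENNReal.ofReal (gagE n s p u) := by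
    have hKine : Ki ^ (p' / p) ≠ ⊤ :=
      ENNReal.rpow_ne_top_of_nonneg (by positivity) hKitop
    calc ∫⁻ x, (‖T x‖₊ : ℝ≥0∞) ^ p'
        ≤ ∫⁻ x, (G x ^ (1 / p') * Ki ^ (1 / p)) ^ p' :=
          lintegral_mono fun x => ENNReal.rpow_le_rpow (bpt x) hp'0.le
      _ = ∫⁻ x, Ki ^ (p' / p) * G x := by
          refine lintegral_congr fun x => ?_
          rw [ENNReal.mul_rpow_of_nonneg _ _ hp'0.le, ← ENNReal.rpow_mul,
            ← ENNReal.rpow_mul, one_div_mul_cancel hp'0.ne', ENNReal.rpow_one,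
            one_div_mul_eq_div, mul_comm]
      _ = Ki ^ (p' / p) * ∫⁻ x, G x := lintegral_const_mul' _ _ hKine
      _ ≤ Ki ^ (p' / p) * ENNReal.ofReal (gagE n s p u) := mul_le_mul_right hGle _
  -- measurability of T
  have hTm : StronglyMeasurable T := by
    have hU : MeasurableSet {z : Rn n × Rn n | ε < ‖z.1 - z.2‖} :=
      measurableSet_lt measurable_const (measurable_fst.sub measurable_snd).norm
    set Ψ : Rn n × Rn n → ℝ := Set.indicator {z : Rn n × Rn n | ε < ‖z.1 - z.2‖}
      (fun z => |w z.1 - w z.2| ^ (p - 2) * (w z.1 - w z.2) / ‖z.1 - z.2‖ ^ q) with hΨdef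
    have hΨm : StronglyMeasurable Ψ :=
      (Measurable.indicator (by fun_prop) hU).stronglyMeasurable
    have hTP : T = fun x => ∫ y, Ψ (x, y) := by
      funext x
      rw [hTdef]
      show (∫ y in {y : Rn n | ε < ‖x - y‖},
        |w x - w y| ^ (p - 2) * (w x - w y) / ‖x - y‖ ^ ((n:ℝ) + s * p)) = _
      rw [← integral_indicator (hSx x)]
      refine integral_congr_ae (Filter.Eventually.of_forall fun y => ?_)
      by_cases h : ε < ‖x - y‖ <;>
        simp [hΨdef, Set.indicator, h, hSdef, hqdef]
    rw [hTP]
    exact hΨm.integral_prod_right'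
  have hgag0 : 0 ≤ gagE n s p u := integral_nonneg fun z => by positivity
  have hfin : ∫⁻ x, (‖T x‖₊ : ℝ≥0∞) ^ p' ≠ ⊤ :=
    (lt_of_le_of_lt hmain (ENNReal.mul_lt_top
      (ENNReal.rpow_lt_top_of_nonneg (by positivity) hKitop)
      ENNReal.ofReal_lt_top)).ne
  have memT : MemLp T (ENNReal.ofReal p') volume := by
    refine ⟨hTm.aestronglyMeasurable, ?_⟩
    rw [eLpNorm_eq_lintegral_rpow_enorm_toReal (ENNReal.ofReal_pos.2 hp'0).ne' ENNReal.ofReal_ne_top,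
      ENNReal.toReal_ofReal hp'0.le]
    exact ENNReal.rpow_lt_top_of_nonneg (by positivity) hfin
  refine ⟨(memLp_congr_ae hTu).2 memT, ?_⟩
  have hint : ∫ x, |truncOp n s p ε u x| ^ p' = (∫⁻ x, (‖T x‖₊ : ℝ≥0∞) ^ p').toReal := by
    rw [integral_congr_ae (hTu.mono fun x hx => by rw [hx])]
    have hmeas : AEStronglyMeasurable (fun x => |T x| ^ p') volume := by
      have h := hTm.measurable
      exact (by fun_prop : Measurable fun x => |T x| ^ p').aestronglyMeasurable
    rw [integral_eq_lintegral_of_nonneg_ae (Filter.Eventually.of_forall fun x => by positivity)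
      hmeas]
    congr 1
    refine lintegral_congr fun x => ?_
    rw [← Real.norm_eq_abs, ← ENNReal.ofReal_rpow_of_nonneg (norm_nonneg _) hp'0.le,
      ofReal_norm, enorm_eq_nnnorm]
  have hle2 : ∫ x, |truncOp n s p ε u x| ^ p' ≤ K ^ (p' / p) * gagE n s p u := by
    rw [hint]
    calc (∫⁻ x, (‖T x‖₊ : ℝ≥0∞) ^ p').toReal
        ≤ (Ki ^ (p' / p) * ENNReal.ofReal (gagE n s p u)).toReal :=
          ENNReal.toReal_mono (ENNReal.mul_ne_top
            (ENNReal.rpow_ne_top_of_nonneg (by positivity) hKitop)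
            ENNReal.ofReal_ne_top) hmain
      _ = K ^ (p' / p) * gagE n s p u := by
          rw [ENNReal.toReal_mul, ← ENNReal.toReal_rpow, ENNReal.toReal_ofReal hK0,
            ENNReal.toReal_ofReal hgag0]
  -- final algebra
  set ω : ℝ := (volume (ball (0 : Rn n) 1)).toReal with hωdef
  have hω0 : 0 ≤ ω := ENNReal.toReal_nonneg
  have hKval : K = ((n : ℝ) * ω / (s * p)) * ε ^ (-(s * p)) := by
    rw [hKdef, hqsub]; ring
  have hrhs : ((n : ℝ) * ω / (s * p)) ^ (1 / p) * ε ^ (-s) * gagSemi n s p u ^ (p / p')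
      = (K ^ (p' / p) * gagE n s p u) ^ (1 / p') := by
    have hC0 : 0 ≤ (n : ℝ) * ω / (s * p) := by positivity
    have e1 : (K ^ (p' / p) * gagE n s p u) ^ (1 / p')
        = (K ^ (p' / p)) ^ (1 / p') * gagE n s p u ^ (1 / p') :=
      Real.mul_rpow (Real.rpow_nonneg (by rw [hKval]; positivity) _) hgag0
    have e2 : (K ^ (p' / p)) ^ (1 / p') = K ^ (1 / p) := by
      rw [← Real.rpow_mul (by rw [hKval]; positivity)]
      congr 1
      field_simp
    have e3 : K ^ (1 / p) = ((n : ℝ) * ω / (s * p)) ^ (1 / p) * ε ^ (-s) := by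
      rw [hKval, Real.mul_rpow hC0 (Real.rpow_nonneg hε.le _), ← Real.rpow_mul hε.le,
        show -(s * p) * (1 / p) = -s by field_simp]
    have e4 : gagSemi n s p u ^ (p / p') = gagE n s p u ^ (1 / p') := by
      rw [show gagSemi n s p u = gagE n s p u ^ (1 / p) from rfl,
        ← Real.rpow_mul hgag0]
      congr 1
      rw [hp'def]
      field_simp
    rw [e1, e2, e3, e4]
  show lpNorm n p' (truncOp n s p ε u) ≤ _
  rw [show lpNorm n p' (truncOp n s p ε u)
      = (∫ x, |truncOp n s p ε u x| ^ p') ^ (1 / p') from rfl, hrhs]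
  exact Real.rpow_le_rpow (integral_nonneg fun x => by positivity) hle2 (by positivity)
end
end

section
/- For every u, v ∈ W^{s,p}(ℝⁿ), lim_{ε → 0⁺} ∫_{ℝⁿ} (−Δ_p)_ε^s u(x) · v(x) dx = H(u,v), where (−Δ_p)_ε^s u(x) := ∫_{{y : |x−y| > ε}} |u(x)−u(y)|^{p−2}(u(x)−u(y)) / |x−y|^{n+sp} dy. -/
open MeasureTheory Real Filter Metric Bornology

noncomputable section

/-! ### Auxiliary definitions and lemmas -/

section Aux

open scoped ENNReal

variable {α : Type*} [MeasurableSpace α] {μ : Measure α}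

/-- Hölder: if `f, g ≥ 0` are integrable and `a + b = 1` with `a, b > 0`, then
`f ^ a * g ^ b` is integrable. -/
lemma aux_integrable_rpow_mul {f g : α → ℝ} (hf : Integrable f μ) (hg : Integrable g μ)
    (hf0 : ∀ x, 0 ≤ f x) (hg0 : ∀ x, 0 ≤ g x) {a b : ℝ} (ha : 0 < a) (hb : 0 < b)
    (hab : a + b = 1) : Integrable (fun x => f x ^ a * g x ^ b) μ := by
  have hma : Measurable fun t : ℝ => t ^ a := by fun_prop
  have hmb : Measurable fun t : ℝ => t ^ b := by fun_prop
  have hfa : AEMeasurable (fun x => f x ^ a) μ := hma.comp_aemeasurable hf.aemeasurable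
  have hgb : AEMeasurable (fun x => g x ^ b) μ := hmb.comp_aemeasurable hg.aemeasurable
  refine ⟨(hfa.mul hgb).aestronglyMeasurable, ?_⟩
  rw [hasFiniteIntegral_iff_norm]
  have hptwise : ∀ x, ENNReal.ofReal ‖f x ^ a * g x ^ b‖
      = ENNReal.ofReal (f x) ^ a * ENNReal.ofReal (g x) ^ b := by
    intro x
    rw [norm_mul, Real.norm_of_nonneg (Real.rpow_nonneg (hf0 x) a),
      Real.norm_of_nonneg (Real.rpow_nonneg (hg0 x) b),
      ENNReal.ofReal_mul (Real.rpow_nonneg (hf0 x) a),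
      ← ENNReal.ofReal_rpow_of_nonneg (hf0 x) ha.le,
      ← ENNReal.ofReal_rpow_of_nonneg (hg0 x) hb.le]
  have h1 : ∫⁻ x, ENNReal.ofReal (f x) ∂μ < ⊤ := by
    have h := hf.hasFiniteIntegral
    rw [hasFiniteIntegral_iff_norm] at h
    have he : (fun x => ENNReal.ofReal ‖f x‖) = fun x => ENNReal.ofReal (f x) :=
      funext fun x => by rw [Real.norm_of_nonneg (hf0 x)]
    rwa [he] at h
  have h2 : ∫⁻ x, ENNReal.ofReal (g x) ∂μ < ⊤ := by
    have h := hg.hasFiniteIntegral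
    rw [hasFiniteIntegral_iff_norm] at h
    have he : (fun x => ENNReal.ofReal ‖g x‖) = fun x => ENNReal.ofReal (g x) :=
      funext fun x => by rw [Real.norm_of_nonneg (hg0 x)]
    rwa [he] at h
  calc ∫⁻ x, ENNReal.ofReal ‖f x ^ a * g x ^ b‖ ∂μ
      = ∫⁻ x, ENNReal.ofReal (f x) ^ a * ENNReal.ofReal (g x) ^ b ∂μ := by
        simp_rw [hptwise]
    _ ≤ (∫⁻ x, ENNReal.ofReal (f x) ∂μ) ^ a * (∫⁻ x, ENNReal.ofReal (g x) ∂μ) ^ b :=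
        ENNReal.lintegral_mul_norm_pow_le
          (ENNReal.measurable_ofReal.comp_aemeasurable hf.aemeasurable)
          (ENNReal.measurable_ofReal.comp_aemeasurable hg.aemeasurable) ha.le hb.le hab
    _ < ⊤ := ENNReal.mul_lt_top (ENNReal.rpow_lt_top_of_nonneg ha.le h1.ne)
          (ENNReal.rpow_lt_top_of_nonneg hb.le h2.ne)

/-- The key pointwise (Hölder-compatible) bound. -/
lemma aux_key_bound {p : ℝ} (hp : 1 < p) (t b W : ℝ) (hW : 0 ≤ W) :
    |(|t| ^ (p - 2) * t / W * b)| ≤ (|t| ^ p / W) ^ ((p - 1) / p) * (|b| ^ p / W) ^ (1 / p) := by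
  have hp0 : (0:ℝ) < p := by linarith
  have ha : 0 < (p - 1) / p := div_pos (by linarith) hp0
  have hb' : 0 < 1 / p := by positivity
  have hRHS : 0 ≤ (|t| ^ p / W) ^ ((p - 1) / p) * (|b| ^ p / W) ^ (1 / p) := by positivity
  rcases eq_or_ne t 0 with rfl | ht
  · have hpm2 : |(0:ℝ)| ^ (p - 2) * (0:ℝ) / W * b = 0 := by ring
    rw [hpm2, abs_zero]
    simpa using hRHS
  rcases hW.eq_or_lt with rfl | hW0
  · rw [div_zero, div_zero, div_zero, Real.zero_rpow (ne_of_gt ha),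
      Real.zero_rpow (ne_of_gt hb'), zero_mul, zero_mul, abs_zero]
  · have hT : 0 < |t| := abs_pos.mpr ht
    have hpow : |t| ^ (p - 2) * |t| = |t| ^ (p - 1) := by
      have h := Real.rpow_add hT (p - 2) 1
      rw [Real.rpow_one] at h
      rw [← h]
      congr 1
      ring
    have hL : |(|t| ^ (p - 2) * t / W * b)| = |t| ^ (p - 1) * |b| / W := by
      rw [abs_mul, abs_div, abs_mul,
        abs_of_nonneg (Real.rpow_nonneg (abs_nonneg t) _), abs_of_pos hW0, hpow,
        div_mul_eq_mul_div]
    have hR : (|t| ^ p / W) ^ ((p - 1) / p) * (|b| ^ p / W) ^ (1 / p)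
        = |t| ^ (p - 1) * |b| / W := by
      rw [Real.div_rpow (Real.rpow_nonneg (abs_nonneg t) p) hW0.le,
        Real.div_rpow (Real.rpow_nonneg (abs_nonneg b) p) hW0.le,
        div_mul_div_comm, ← Real.rpow_add hW0,
        ← Real.rpow_mul (abs_nonneg t), ← Real.rpow_mul (abs_nonneg b)]
      have e1 : p * ((p - 1) / p) = p - 1 := by field_simp
      have e2 : p * (1 / p) = 1 := by field_simp
      have e3 : (p - 1) / p + 1 / p = 1 := by field_simp; ring
      rw [e1, e2, e3, Real.rpow_one, Real.rpow_one]
    rw [hL, hR]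

end Aux

/-- The kernel `Φ(x,y) = |u(x)-u(y)|^{p-2}(u(x)-u(y))/|x-y|^{n+sp}`. -/
def auxPhi (n : ℕ) (s p : ℝ) (u : Rn n → ℝ) (z : Rn n × Rn n) : ℝ :=
  |u z.1 - u z.2| ^ (p - 2) * (u z.1 - u z.2) / ‖z.1 - z.2‖ ^ ((n : ℝ) + s * p)

/-- The symmetrized integrand. -/
def auxK (n : ℕ) (s p : ℝ) (u v : Rn n → ℝ) (z : Rn n × Rn n) : ℝ :=
  auxPhi n s p u z * (v z.1 - v z.2)

/-- The unsymmetrized integrand. -/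
def auxF (n : ℕ) (s p : ℝ) (u v : Rn n → ℝ) (z : Rn n × Rn n) : ℝ :=
  auxPhi n s p u z * v z.1

/-- The region `{|x - y| > ε}`. -/
def auxS (n : ℕ) (ε : ℝ) : Set (Rn n × Rn n) := {z | ε < ‖z.1 - z.2‖}

lemma aux_S_meas (n : ℕ) (ε : ℝ) : MeasurableSet (auxS n ε) :=
  (isOpen_lt continuous_const ((continuous_fst.sub continuous_snd).norm)).measurableSet

lemma aux_phi_aem (n : ℕ) (s p : ℝ) (u : Rn n → ℝ)
    (hu : AEStronglyMeasurable u (volume : Measure (Rn n))) :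
    AEMeasurable (auxPhi n s p u) (volume : Measure (Rn n × Rn n)) := by
  have hdm : AEMeasurable (fun z : Rn n × Rn n => u z.1 - u z.2) volume := by
    rw [Measure.volume_eq_prod]
    exact (hu.comp_fst.sub hu.comp_snd).aemeasurable
  have hwm : Measurable (fun z : Rn n × Rn n => ‖z.1 - z.2‖ ^ ((n : ℝ) + s * p)) := by
    fun_prop
  have m1 : Measurable fun t : ℝ => |t| ^ (p - 2) := by fun_prop
  exact ((m1.comp_aemeasurable hdm).mul hdm).div hwm.aemeasurable

lemma aux_e_aem (n : ℕ) (v : Rn n → ℝ)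
    (hv : AEStronglyMeasurable v (volume : Measure (Rn n))) :
    AEMeasurable (fun z : Rn n × Rn n => v z.1 - v z.2) (volume : Measure (Rn n × Rn n)) := by
  rw [Measure.volume_eq_prod]
  exact (hv.comp_fst.sub hv.comp_snd).aemeasurable

lemma aux_v1_aem (n : ℕ) (v : Rn n → ℝ)
    (hv : AEStronglyMeasurable v (volume : Measure (Rn n))) :
    AEMeasurable (fun z : Rn n × Rn n => v z.1) (volume : Measure (Rn n × Rn n)) := by
  rw [Measure.volume_eq_prod]
  exact hv.comp_fst.aemeasurable

/-- Integrability of the symmetrized integrand `K`. -/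
lemma aux_K_int (n : ℕ) (s p : ℝ) (hp : 1 < p) (u v : Rn n → ℝ)
    (hu : memW n s p u) (hv : memW n s p v) :
    Integrable (auxK n s p u v) (volume : Measure (Rn n × Rn n)) := by
  have hp0 : (0:ℝ) < p := by linarith
  have ha : 0 < (p - 1) / p := div_pos (by linarith) hp0
  have hb : 0 < 1 / p := by positivity
  have hab : (p - 1) / p + 1 / p = 1 := by field_simp; ring
  have hdom := aux_integrable_rpow_mul hu.2 hv.2
    (fun z => by positivity) (fun z => by positivity) ha hb hab
  have hm : AEMeasurable (auxK n s p u v) (volume : Measure (Rn n × Rn n)) :=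
    (aux_phi_aem n s p u hu.1.aestronglyMeasurable).mul
      (aux_e_aem n v hv.1.aestronglyMeasurable)
  refine hdom.mono' hm.aestronglyMeasurable (ae_of_all _ fun z => ?_)
  rw [Real.norm_eq_abs]
  exact aux_key_bound hp (u z.1 - u z.2) (v z.1 - v z.2)
    (‖z.1 - z.2‖ ^ ((n : ℝ) + s * p)) (by positivity)

/-- Integrability of the truncated weight. -/
lemma aux_W_int (n : ℕ) (s p : ℝ) (hs : 0 < s) (hp : 1 < p) {ε : ℝ} (hε : 0 < ε) :
    Integrable ({t : Rn n | ε < ‖t‖}.indicator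
      (fun t => ‖t‖ ^ (-((n : ℝ) + s * p)))) (volume : Measure (Rn n)) := by
  have hp0 : (0:ℝ) < p := by linarith
  have hc0 : (0:ℝ) < (n : ℝ) + s * p :=
    add_pos_of_nonneg_of_pos (Nat.cast_nonneg n) (mul_pos hs hp0)
  set c : ℝ := (n : ℝ) + s * p with hcdef
  have hmeas : MeasurableSet {t : Rn n | ε < ‖t‖} :=
    (isOpen_lt continuous_const continuous_norm).measurableSet
  have hWc : Measurable (fun t : Rn n => ‖t‖ ^ (-c)) := by fun_prop
  have hfr : (Module.finrank ℝ (Rn n) : ℝ) < c := by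
    rw [finrank_euclideanSpace_fin]
    simp only [hcdef]
    nlinarith
  have base : Integrable (fun t : Rn n => (1 + 1 / ε) ^ c * (1 + ‖t‖) ^ (-c))
      (volume : Measure (Rn n)) := (integrable_one_add_norm hfr).const_mul _
  have hon : IntegrableOn (fun t : Rn n => ‖t‖ ^ (-c)) {t : Rn n | ε < ‖t‖} volume := by
    refine (base.restrict (s := {t : Rn n | ε < ‖t‖})).mono'
      (hWc.aestronglyMeasurable.restrict) ?_
    rw [ae_restrict_iff' hmeas]
    refine ae_of_all _ fun t ht => ?_
    have h1 : 0 < ‖t‖ := lt_trans hε ht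
    have hx : 0 < ‖t‖ ^ c := Real.rpow_pos_of_pos h1 c
    have hy : (0:ℝ) < (1 + ‖t‖) ^ c := Real.rpow_pos_of_pos (by positivity) c
    rw [Real.norm_of_nonneg (Real.rpow_nonneg (norm_nonneg t) _)]
    rw [Real.rpow_neg (norm_nonneg t), Real.rpow_neg (by positivity : (0:ℝ) ≤ 1 + ‖t‖)]
    have hkey : 1 + ‖t‖ ≤ (1 + 1 / ε) * ‖t‖ := by
      have h2 : 1 ≤ ‖t‖ / ε := (one_le_div hε).mpr ht.le
      have h3 : ‖t‖ / ε = 1 / ε * ‖t‖ := by ring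
      nlinarith [h2, h3]
    have h2 : (1 + ‖t‖) ^ c ≤ ((1 + 1 / ε) * ‖t‖) ^ c :=
      Real.rpow_le_rpow (by positivity) hkey hc0.le
    rw [Real.mul_rpow (by positivity) (norm_nonneg t)] at h2
    rw [← div_eq_mul_inv, le_div_iff₀ hy, inv_mul_le_iff₀ hx]
    linarith
  exact hon.integrable_indicator hmeas

/-- Products `g(x) · W(x - y)` are integrable on the product space. -/
lemma aux_fst_mul_sub {n : ℕ} {g W : Rn n → ℝ} (hg : Integrable g (volume : Measure (Rn n)))
    (hW : Integrable W (volume : Measure (Rn n))) :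
    Integrable (fun z : Rn n × Rn n => g z.1 * W (z.1 - z.2))
      (volume : Measure (Rn n × Rn n)) := by
  have h1 : Integrable (fun z : Rn n × Rn n => g z.1 * W z.2)
      (volume : Measure (Rn n × Rn n)) := by
    rw [Measure.volume_eq_prod]
    exact hg.mul_prod hW
  have hT : MeasurePreserving (fun z : Rn n × Rn n => (z.1, z.1 - z.2))
      (volume : Measure (Rn n × Rn n)) (volume : Measure (Rn n × Rn n)) := by
    rw [Measure.volume_eq_prod]
    have h2 := measurePreserving_prod_sub (volume : Measure (Rn n)) volume
    have h3 : MeasurePreserving (fun z : Rn n × Rn n => (z.1, -z.2))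
        ((volume : Measure (Rn n)).prod volume) ((volume : Measure (Rn n)).prod volume) :=
      (MeasurePreserving.id _).prod (Measure.measurePreserving_neg _)
    have h4 := h3.comp h2
    convert h4 using 1
    · rfl
    · rfl
    funext z
    simp [neg_sub]
  have := (hT.integrable_comp h1.aestronglyMeasurable).mpr h1
  simpa [Function.comp_def] using this

/-- Integrability of the indicator of `F` over the truncated region. -/
lemma aux_G_int (n : ℕ) (s p : ℝ) (hs : 0 < s) (hp : 1 < p) (u v : Rn n → ℝ)
    (hu : memW n s p u) (hv : memW n s p v) {ε : ℝ} (hε : 0 < ε) :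
    Integrable ((auxS n ε).indicator (auxF n s p u v))
      (volume : Measure (Rn n × Rn n)) := by
  have hp0 : (0:ℝ) < p := by linarith
  have ha : 0 < (p - 1) / p := div_pos (by linarith) hp0
  have hb : 0 < 1 / p := by positivity
  have hab : (p - 1) / p + 1 / p = 1 := by field_simp; ring
  set c : ℝ := (n : ℝ) + s * p with hcdef
  -- second Hölder factor
  set h2 : Rn n × Rn n → ℝ :=
    (auxS n ε).indicator (fun z => |v z.1| ^ p / ‖z.1 - z.2‖ ^ c) with hh2def
  have hgint : Integrable (fun x : Rn n => |v x| ^ p) (volume : Measure (Rn n)) := by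
    have hne0 : (ENNReal.ofReal p) ≠ 0 := by
      simp only [ne_eq, ENNReal.ofReal_eq_zero, not_le]; linarith
    have := hv.1.integrable_norm_rpow hne0 ENNReal.ofReal_ne_top
    simpa [ENNReal.toReal_ofReal hp0.le, Real.norm_eq_abs] using this
  have hWint := aux_W_int n s p hs hp hε
  have hh2eq : h2 = fun z : Rn n × Rn n => |v z.1| ^ p *
      ({t : Rn n | ε < ‖t‖}.indicator (fun t => ‖t‖ ^ (-c)) (z.1 - z.2)) := by
    funext z
    by_cases hz : z ∈ auxS n ε
    · rw [hh2def, Set.indicator_of_mem hz,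
        Set.indicator_of_mem (show z.1 - z.2 ∈ {t : Rn n | ε < ‖t‖} from hz)]
      rw [Real.rpow_neg (norm_nonneg _), div_eq_mul_inv]
    · rw [hh2def, Set.indicator_of_notMem hz,
        Set.indicator_of_notMem (show z.1 - z.2 ∉ {t : Rn n | ε < ‖t‖} from hz), mul_zero]
  have hh2int : Integrable h2 (volume : Measure (Rn n × Rn n)) := by
    rw [hh2eq]
    exact aux_fst_mul_sub hgint hWint
  have hh2nn : ∀ z, 0 ≤ h2 z := by
    intro z
    rw [hh2def]
    apply Set.indicator_nonneg
    intro z _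
    positivity
  have hdom := aux_integrable_rpow_mul hu.2 hh2int
    (fun z => by positivity) hh2nn ha hb hab
  have hm : AEMeasurable (auxF n s p u v) (volume : Measure (Rn n × Rn n)) :=
    (aux_phi_aem n s p u hu.1.aestronglyMeasurable).mul
      (aux_v1_aem n v hv.1.aestronglyMeasurable)
  refine hdom.mono' (hm.aestronglyMeasurable.indicator (aux_S_meas n ε))
    (ae_of_all _ fun z => ?_)
  by_cases hz : z ∈ auxS n ε
  · rw [Set.indicator_of_mem hz, hh2def, Set.indicator_of_mem hz]
    rw [Real.norm_eq_abs]
    exact aux_key_bound hp (u z.1 - u z.2) (v z.1) (‖z.1 - z.2‖ ^ c) (by positivity)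
  · rw [Set.indicator_of_notMem hz, hh2def, Set.indicator_of_notMem hz]
    simp only [norm_zero]
    positivity

/-- The diagonal is a null set. -/
lemma aux_diag_null (n : ℕ) (hn : 1 ≤ n) :
    (volume : Measure (Rn n × Rn n)) {z | z.1 = z.2} = 0 := by
  haveI : Nonempty (Fin n) := ⟨⟨0, hn⟩⟩
  rw [Measure.volume_eq_prod,
    Measure.prod_apply (measurableSet_eq_fun measurable_fst measurable_snd)]
  have hfib : ∀ x : Rn n, (Prod.mk x ⁻¹' {z : Rn n × Rn n | z.1 = z.2}) = {x} := by
    intro x; ext y; simp [eq_comm]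
  simp [hfib]

/-- The symmetrization identity for truncated integrals. -/
lemma aux_claim (n : ℕ) (s p : ℝ) (hs : 0 < s) (hp : 1 < p) (u v : Rn n → ℝ)
    (hu : memW n s p u) (hv : memW n s p v) {ε : ℝ} (hε : 0 < ε) :
    ∫ x, truncOp n s p ε u x * v x
      = (1 / 2) * ∫ z : Rn n × Rn n, (auxS n ε).indicator (auxK n s p u v) z := by
  set c : ℝ := (n : ℝ) + s * p with hcdef
  set G : Rn n × Rn n → ℝ := (auxS n ε).indicator (auxF n s p u v) with hGdef
  have hGint : Integrable G (volume : Measure (Rn n × Rn n)) :=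
    aux_G_int n s p hs hp u v hu hv hε
  have hGswap : Integrable (fun z : Rn n × Rn n => G z.swap)
      (volume : Measure (Rn n × Rn n)) := by
    rw [Measure.volume_eq_prod]
    rw [Measure.volume_eq_prod] at hGint
    exact (Measure.measurePreserving_swap.integrable_comp hGint.aestronglyMeasurable).mpr hGint
  -- Step 1: pointwise identity for the inner integral
  have hstep : ∀ x : Rn n, truncOp n s p ε u x * v x = ∫ y, G (x, y) := by
    intro x
    have hsets : MeasurableSet {y : Rn n | ε < ‖x - y‖} :=
      (isOpen_lt continuous_const (continuous_const.sub continuous_id).norm).measurableSet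
    have e1 : truncOp n s p ε u x * v x
        = (∫ y, ({y : Rn n | ε < ‖x - y‖}).indicator
            (fun y => |u x - u y| ^ (p - 2) * (u x - u y) / ‖x - y‖ ^ c) y) * v x := by
      rw [truncOp, integral_indicator hsets]
    rw [e1, ← integral_mul_const]
    congr 1
    funext y
    by_cases hy : ε < ‖x - y‖
    · rw [Set.indicator_of_mem (show y ∈ {y : Rn n | ε < ‖x - y‖} from hy), hGdef,
        Set.indicator_of_mem (show (x, y) ∈ auxS n ε from hy)]
      rfl
    · rw [Set.indicator_of_notMem (show y ∉ {y : Rn n | ε < ‖x - y‖} from hy), hGdef,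
        Set.indicator_of_notMem (show (x, y) ∉ auxS n ε from hy), zero_mul]
  -- Step 2: Fubini
  have hfub : ∫ x, ∫ y, G (x, y) = ∫ z : Rn n × Rn n, G z := by
    rw [Measure.volume_eq_prod (α := Rn n) (β := Rn n)]
    exact (integral_prod G (by rwa [Measure.volume_eq_prod] at hGint)).symm
  -- Step 3: swap invariance
  have hswap_eq : ∫ z : Rn n × Rn n, G z = ∫ z : Rn n × Rn n, G z.swap := by
    conv_lhs => rw [Measure.volume_eq_prod]
    conv_rhs => rw [Measure.volume_eq_prod]
    exact (integral_prod_swap G).symm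
  -- Step 4: pointwise symmetrization
  have hsum : ∀ z : Rn n × Rn n, G z + G z.swap
      = (auxS n ε).indicator (auxK n s p u v) z := by
    intro z
    have hmem : z.swap ∈ auxS n ε ↔ z ∈ auxS n ε := by
      simp [auxS, norm_sub_rev]
    by_cases hz : z ∈ auxS n ε
    · rw [hGdef, Set.indicator_of_mem hz, Set.indicator_of_mem (hmem.mpr hz),
        Set.indicator_of_mem hz]
      show auxF n s p u v z + auxF n s p u v z.swap = auxK n s p u v z
      simp only [auxF, auxK, auxPhi, Prod.fst_swap, Prod.snd_swap]
      rw [abs_sub_comm (u z.2) (u z.1), norm_sub_rev z.2 z.1]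
      ring
    · rw [hGdef, Set.indicator_of_notMem hz, Set.indicator_of_notMem (fun h => hz (hmem.mp h)),
        Set.indicator_of_notMem hz, add_zero]
  calc ∫ x, truncOp n s p ε u x * v x
      = ∫ x, ∫ y, G (x, y) := by
        congr 1
        funext x
        exact hstep x
    _ = ∫ z : Rn n × Rn n, G z := hfub
    _ = (1 / 2) * ((∫ z : Rn n × Rn n, G z) + ∫ z : Rn n × Rn n, G z.swap) := by
        rw [← hswap_eq]; ring
    _ = (1 / 2) * ∫ z : Rn n × Rn n, (G z + G z.swap) := by
        rw [integral_add hGint hGswap]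
    _ = (1 / 2) * ∫ z : Rn n × Rn n, (auxS n ε).indicator (auxK n s p u v) z := by
        congr 1
        exact integral_congr_ae (ae_of_all _ hsum)

theorem statement1 (n : ℕ) (hn : 1 ≤ n) (s p : ℝ) (hs : 0 < s) (hs1 : s < 1) (hp : 1 < p)
    (u v : Rn n → ℝ) (hu : memW n s p u) (hv : memW n s p v) :
    Tendsto (fun ε : ℝ => ∫ x, truncOp n s p ε u x * v x)
      (nhdsWithin 0 (Set.Ioi 0)) (nhds (Hform n s p u v)) := by
  have hHeq : Hform n s p u v = (1 / 2) * ∫ z : Rn n × Rn n, auxK n s p u v z := by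
    rw [Hform]
    congr 1
    apply integral_congr_ae
    refine ae_of_all _ fun z => ?_
    simp only [auxK, auxPhi]
    ring
  have hKint := aux_K_int n s p hp u v hu hv
  have hKm : AEStronglyMeasurable (auxK n s p u v) (volume : Measure (Rn n × Rn n)) :=
    hKint.aestronglyMeasurable
  have hly : Tendsto (fun ε : ℝ => ∫ z : Rn n × Rn n, (auxS n ε).indicator (auxK n s p u v) z)
      (nhdsWithin 0 (Set.Ioi 0)) (nhds (∫ z : Rn n × Rn n, auxK n s p u v z)) := by
    apply tendsto_integral_filter_of_dominated_convergence (fun z => ‖auxK n s p u v z‖)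
    · exact Eventually.of_forall fun ε => hKm.indicator (aux_S_meas n ε)
    · exact Eventually.of_forall fun ε =>
        ae_of_all _ fun z => norm_indicator_le_norm_self _ _
    · exact hKint.norm
    · have hdiag : ∀ᵐ z : Rn n × Rn n ∂(volume : Measure (Rn n × Rn n)), z.1 ≠ z.2 := by
        rw [ae_iff]
        simpa using aux_diag_null n hn
      filter_upwards [hdiag] with z hz
      have hpos : 0 < ‖z.1 - z.2‖ := by rwa [norm_pos_iff, sub_ne_zero]
      refine Tendsto.congr' ?_ tendsto_const_nhds
      filter_upwards [Ioo_mem_nhdsGT_of_mem (Set.mem_Ico.mpr ⟨le_refl (0:ℝ), hpos⟩)]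
        with ε hε
      exact (Set.indicator_of_mem (show z ∈ auxS n ε from hε.2) _).symm
  rw [hHeq]
  refine Tendsto.congr' ?_ (hly.const_mul (1 / 2 : ℝ))
  filter_upwards [self_mem_nhdsWithin] with ε hε
  exact (aux_claim n s p hs hp u v hu hv hε).symm
end
end

section
/- Let 1 < p < ∞ and let u, v : Ω → ℝ be functions with u ≥ 0 and v > 0 on Ω. Define L(u,v)(x,y) := |u(x)−u(y)|^p − |v(x)−v(y)|^{p−2}(v(x)−v(y)) (u(x)^p / v(x)^{p−1} − u(y)^p / v(y)^{p−1}). Then L(u,v)(x,y) ≥ 0 for all (x,y) ∈ Ω × Ω; moreover L(u,v) is identically zero on Ω × Ω if and only if there exists a constant k such that u = k·v on Ω. -/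
open MeasureTheory Real Filter Metric Bornology

noncomputable section

lemma tangent_lt (p : ℝ) (hp : 1 < p) {s t : ℝ} (hs : 0 ≤ s) (ht : 0 ≤ t)
    (hne : s ≠ t) : t ^ p + p * t ^ (p - 1) * (s - t) < s ^ p := by
  rcases eq_or_lt_of_le ht with h0 | h0
  · rw [← h0] at hne ⊢
    rw [Real.zero_rpow (by linarith : p ≠ 0),
        Real.zero_rpow (by intro h; apply hne; nlinarith : (p - 1) ≠ 0)]
    have : 0 < s := lt_of_le_of_ne hs (Ne.symm hne)
    simpa using Real.rpow_pos_of_pos this p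
  · have hx : -1 ≤ s / t - 1 := by
      have : 0 ≤ s / t := div_nonneg hs h0.le
      linarith
    have hx' : s / t - 1 ≠ 0 := by
      intro h
      apply hne
      field_simp at h
      linarith
    have hb := one_add_mul_self_lt_rpow_one_add hx hx' hp
    have h1 : (1 + (s / t - 1)) = s / t := by ring
    rw [h1, Real.div_rpow hs h0.le] at hb
    have htp : 0 < t ^ p := Real.rpow_pos_of_pos h0 p
    have hb2 : (1 + p * (s / t - 1)) * t ^ p < s ^ p := by
      rw [← lt_div_iff₀ htp]; exact hb
    have h3 : t ^ (p - 1) * t = t ^ p := by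
      rw [← Real.rpow_add_one (ne_of_gt h0)]; ring_nf
    calc t ^ p + p * t ^ (p - 1) * (s - t)
        = (1 + p * (s / t - 1)) * t ^ p := by
          rw [← h3]; field_simp
      _ < s ^ p := hb2

lemma tangent_le (p : ℝ) (hp : 1 < p) {s t : ℝ} (hs : 0 ≤ s) (ht : 0 ≤ t) :
    t ^ p + p * t ^ (p - 1) * (s - t) ≤ s ^ p := by
  rcases eq_or_ne s t with rfl | hne
  · simp
  · exact (tangent_lt p hp hs ht hne).le

-- helper: x^(q) * x = x^(q+1) for 0 ≤ x, q, q+1 ≠ 0 handled; we use positive x mostly.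

-- one-sided key lemma assuming d ≤ c
lemma key_le (p : ℝ) (hp : 1 < p) {a b c d : ℝ} (ha : 0 ≤ a) (hb : 0 ≤ b)
    (hc : 0 < c) (hd : 0 < d) (hdc : d ≤ c) (hne : a * d ≠ b * c) :
    |c - d| ^ (p - 2) * (c - d) * (a ^ p / c ^ (p - 1) - b ^ p / d ^ (p - 1))
      < |a - b| ^ p := by
  have hp0 : (0:ℝ) < p := by linarith
  have hp1 : (0:ℝ) < p - 1 := by linarith
  rcases eq_or_lt_of_le hdc with hcd | hcd
  · -- c = d : LHS = 0, need a ≠ b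
    rw [hcd]
    simp only [sub_self, mul_zero, zero_mul]
    have hab : a ≠ b := by
      intro h; apply hne; rw [h, hcd]
    have : 0 < |a - b| := abs_pos.mpr (sub_ne_zero.mpr hab)
    simpa using Real.rpow_pos_of_pos this p
  · -- d < c
    obtain ⟨C, hC⟩ : ∃ C, C = c - d := ⟨_, rfl⟩
    obtain ⟨r, hr⟩ : ∃ r, r = a / c := ⟨_, rfl⟩
    rw [← hC]
    have hC0 : 0 < C := by rw [hC]; linarith
    have habs : |C| = C := abs_of_pos hC0
    have hr0 : 0 ≤ r := by rw [hr]; exact div_nonneg ha hc.le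
    -- step 1 : Young/tangent with s = b/d, t = r, multiplied by d
    have hbd : 0 ≤ b / d := div_nonneg hb hd.le
    have hst : b / d ≠ r := by
      intro h
      apply hne
      rw [hr] at h
      field_simp at h
      linarith [h]
    have h1 := tangent_lt p hp hbd hr0 hst
    -- r^p + p r^{p-1} (b/d - r) < (b/d)^p
    have hdp1 : 0 < d ^ (p - 1) := Real.rpow_pos_of_pos hd _
    have hcp1 : 0 < c ^ (p - 1) := Real.rpow_pos_of_pos hc _
    have hdiv : (b / d) ^ p = b ^ p / d ^ p := Real.div_rpow hb hd.le p
    have hdp : d ^ (p-1) * d = d ^ p := by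
      rw [← Real.rpow_add_one (ne_of_gt hd)]; ring_nf
    -- multiply h1 by d : r^p d + p r^{p-1}(b - r d) < b^p / d^{p-1}
    have h2 : r ^ p * d + p * r ^ (p - 1) * (b - r * d) < b ^ p / d ^ (p - 1) := by
      have := mul_lt_mul_of_pos_right h1 hd
      rw [hdiv] at this
      have hrw : b ^ p / d ^ p * d = b ^ p / d ^ (p - 1) := by
        rw [← hdp]; field_simp
      have hbdd : b / d * d = b := div_mul_cancel₀ b hd.ne'
      calc r ^ p * d + p * r ^ (p - 1) * (b - r * d)
          = (r ^ p + p * r ^ (p - 1) * (b / d - r)) * d := by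
            linear_combination (-(p * r ^ (p - 1))) * hbdd
        _ < b ^ p / d ^ p * d := this
        _ = b ^ p / d ^ (p - 1) := hrw
    -- identity: a^p / c^{p-1} = r^p * c, and r^{p-1} * a = r^p * c
    have hrpc : a ^ p / c ^ (p - 1) = r ^ p * c := by
      rw [hr, Real.div_rpow ha hc.le]
      have hcp : c ^ (p-1) * c = c ^ p := by
        rw [← Real.rpow_add_one (ne_of_gt hc)]; ring_nf
      rw [← hcp]; field_simp
    have hra : r ^ (p - 1) * a = r ^ p * c := by
      rcases eq_or_lt_of_le ha with h0 | h0
      · rw [hr, ← h0]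
        simp [Real.zero_rpow (ne_of_gt hp0), Real.zero_rpow (ne_of_gt hp1)]
      · have hr0' : 0 < r := by rw [hr]; exact div_pos h0 hc
        have hpp : r ^ p = r ^ (p - 1) * r := by
          rw [← Real.rpow_add_one hr0'.ne' (p - 1)]; ring_nf
        rw [hpp, mul_assoc, hr, div_mul_cancel₀ a hc.ne']
    have hrr : r ^ (p - 1) * r = r ^ p := by
      rcases eq_or_lt_of_le hr0 with h0 | h0
      · rw [← h0]
        simp [Real.zero_rpow (ne_of_gt hp0), Real.zero_rpow (ne_of_gt hp1)]
      · rw [← Real.rpow_add_one h0.ne']; ring_nf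
    have e1 : p * r ^ (p - 1) * (b - r * d) = p * r ^ (p - 1) * b - p * r ^ p * d := by
      linear_combination (-(p * d)) * hrr
    have hra' : p * r ^ (p - 1) * a = p * r ^ p * c := by
      linear_combination p * hra
    -- combine : diff < p r^{p-1}(a - b) - (p-1) r^p C
    have h3 : a ^ p / c ^ (p - 1) - b ^ p / d ^ (p - 1)
        < p * r ^ (p - 1) * (a - b) - (p - 1) * r ^ p * C := by
      rw [hrpc, hC]
      linarith [h2, hra', e1]
    -- multiply by C^{p-1} > 0
    have hCp1 : 0 < C ^ (p - 1) := Real.rpow_pos_of_pos hC0 _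
    have hCp : C ^ (p - 1) * C = C ^ p := by
      rw [← Real.rpow_add_one (ne_of_gt hC0)]; ring_nf
    have hL : |C| ^ (p - 2) * C = C ^ (p - 1) := by
      rw [habs, ← Real.rpow_add_one (ne_of_gt hC0)]; ring_nf
    have h4 : C ^ (p - 1) * (a ^ p / c ^ (p - 1) - b ^ p / d ^ (p - 1))
        < p * (r ^ (p - 1) * C ^ (p - 1)) * (a - b) - (p - 1) * (r ^ p * C ^ p) := by
      have hm := mul_lt_mul_of_pos_left h3 hCp1
      have e3 : C ^ (p - 1) * (p * r ^ (p - 1) * (a - b) - (p - 1) * r ^ p * C)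
          = p * (r ^ (p - 1) * C ^ (p - 1)) * (a - b) - (p - 1) * (r ^ p * C ^ p) := by
        linear_combination (-((p - 1) * r ^ p)) * hCp
      rw [e3] at hm
      exact hm
    -- bound by tangent with s = |a-b|, t = r*C
    have hs0 : (0:ℝ) ≤ |a - b| := abs_nonneg _
    have ht0 : 0 ≤ r * C := mul_nonneg hr0 hC0.le
    have h5 := tangent_le p hp hs0 ht0
    have hmul1 : (r * C) ^ p = r ^ p * C ^ p := Real.mul_rpow hr0 hC0.le
    have hmul2 : (r * C) ^ (p - 1) = r ^ (p - 1) * C ^ (p - 1) :=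
      Real.mul_rpow hr0 hC0.le
    have htt : (r * C) ^ (p - 1) * (r * C) = (r * C) ^ p := by
      rcases eq_or_lt_of_le ht0 with h0 | h0
      · rw [← h0]
        simp [Real.zero_rpow (ne_of_gt hp0), Real.zero_rpow (ne_of_gt hp1)]
      · rw [← Real.rpow_add_one h0.ne']; ring_nf
    have e4 : p * (r * C) ^ (p - 1) * (|a - b| - r * C)
        = p * ((r * C) ^ (p - 1) * |a - b|) - p * (r * C) ^ p := by
      linear_combination (-p) * htt
    rw [e4, hmul1, hmul2] at h5
    have hab : a - b ≤ |a - b| := le_abs_self _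
    have hcoef : 0 ≤ p * (r ^ (p - 1) * C ^ (p - 1)) := by positivity
    have hK := mul_le_mul_of_nonneg_left hab hcoef
    rw [hL]
    linarith [h4, h5, hK]

lemma picone_lt (p : ℝ) (hp : 1 < p) {a b c d : ℝ} (ha : 0 ≤ a) (hb : 0 ≤ b)
    (hc : 0 < c) (hd : 0 < d) (hne : a * d ≠ b * c) :
    |c - d| ^ (p - 2) * (c - d) * (a ^ p / c ^ (p - 1) - b ^ p / d ^ (p - 1))
      < |a - b| ^ p := by
  rcases le_total d c with h | h
  · exact key_le p hp ha hb hc hd h hne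
  · have hne' : b * c ≠ a * d := fun h' => hne h'.symm
    have := key_le p hp hb ha hd hc h hne'
    have e1 : |d - c| = |c - d| := abs_sub_comm d c
    have e2 : |b - a| = |a - b| := abs_sub_comm b a
    rw [e1, e2] at this
    calc |c - d| ^ (p - 2) * (c - d) * (a ^ p / c ^ (p - 1) - b ^ p / d ^ (p - 1))
        = |c - d| ^ (p - 2) * (d - c) * (b ^ p / d ^ (p - 1) - a ^ p / c ^ (p - 1)) := by
          ring
      _ < |a - b| ^ p := this

lemma picone_eq (p : ℝ) (hp : 1 < p) {a b c d : ℝ} (ha : 0 ≤ a) (hb : 0 ≤ b)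
    (hc : 0 < c) (hd : 0 < d) (heq : a * d = b * c) :
    |c - d| ^ (p - 2) * (c - d) * (a ^ p / c ^ (p - 1) - b ^ p / d ^ (p - 1))
      = |a - b| ^ p := by
  have hp0 : (0:ℝ) < p := by linarith
  obtain ⟨k, hk⟩ : ∃ k, k = a / c := ⟨_, rfl⟩
  have hk0 : 0 ≤ k := by rw [hk]; exact div_nonneg ha hc.le
  have hac : a = k * c := by rw [hk]; field_simp
  have hbd : b = k * d := by
    rw [hk]
    rw [div_mul_eq_mul_div, eq_div_iff hc.ne']
    linear_combination -heq
  have hcp : c ^ (p - 1) * c = c ^ p := by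
    rw [← Real.rpow_add_one (ne_of_gt hc)]; ring_nf
  have hdp : d ^ (p - 1) * d = d ^ p := by
    rw [← Real.rpow_add_one (ne_of_gt hd)]; ring_nf
  have hA : a ^ p / c ^ (p - 1) = k ^ p * c := by
    rw [hac, Real.mul_rpow hk0 hc.le, ← hcp]
    field_simp
  have hB : b ^ p / d ^ (p - 1) = k ^ p * d := by
    rw [hbd, Real.mul_rpow hk0 hd.le, ← hdp]
    field_simp
  have hAB : |a - b| = k * |c - d| := by
    rw [hac, hbd, ← mul_sub, abs_mul, abs_of_nonneg hk0]
  rw [hA, hB, hAB, Real.mul_rpow hk0 (abs_nonneg _)]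
  rcases eq_or_ne c d with rfl | hcd
  · simp [Real.zero_rpow (ne_of_gt hp0)]
  · have habs : 0 < |c - d| := abs_pos.mpr (sub_ne_zero.mpr hcd)
    have h1 : |c - d| ^ (p - 2) * (c - d) * (c - d) = |c - d| ^ p := by
      have : (c - d) * (c - d) = |c - d| * |c - d| := (abs_mul_abs_self _).symm
      rw [mul_assoc, this, ← mul_assoc, ← Real.rpow_add_one habs.ne',
        ← Real.rpow_add_one habs.ne']
      ring_nf
    calc |c - d| ^ (p - 2) * (c - d) * (k ^ p * c - k ^ p * d)
        = k ^ p * (|c - d| ^ (p - 2) * (c - d) * (c - d)) := by ring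
      _ = k ^ p * |c - d| ^ p := by rw [h1]


theorem statement6 {α : Type*} [Nonempty α] (p : ℝ) (hp : 1 < p)
    (u v : α → ℝ) (hu : ∀ x, 0 ≤ u x) (hv : ∀ x, 0 < v x) :
    (∀ x y : α, 0 ≤ |u x - u y| ^ p -
        |v x - v y| ^ (p - 2) * (v x - v y) *
          (u x ^ p / v x ^ (p - 1) - u y ^ p / v y ^ (p - 1))) ∧
    ((∀ x y : α, |u x - u y| ^ p -
        |v x - v y| ^ (p - 2) * (v x - v y) *
          (u x ^ p / v x ^ (p - 1) - u y ^ p / v y ^ (p - 1)) = 0) ↔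
      ∃ k : ℝ, ∀ x, u x = k * v x) := by
  constructor
  · intro x y
    rcases eq_or_ne (u x * v y) (u y * v x) with heq | hne
    · rw [picone_eq p hp (hu x) (hu y) (hv x) (hv y) heq]
      simp
    · have := picone_lt p hp (hu x) (hu y) (hv x) (hv y) hne
      linarith
  · constructor
    · intro h
      obtain x₀ := Classical.arbitrary α
      refine ⟨u x₀ / v x₀, fun x => ?_⟩
      by_contra hne
      have hne' : u x * v x₀ ≠ u x₀ * v x := by
        intro h'
        apply hne
        rw [div_mul_eq_mul_div, eq_div_iff (hv x₀).ne']
        exact h'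
      have hlt := picone_lt p hp (hu x) (hu x₀) (hv x) (hv x₀) hne'
      have h0 := h x x₀
      linarith
    · rintro ⟨k, hk⟩ x y
      have hk0 : 0 ≤ k := by
        obtain x₀ := Classical.arbitrary α
        have := hu x₀
        rw [hk x₀] at this
        nlinarith [hv x₀]
      have heq : u x * v y = u y * v x := by
        rw [hk x, hk y]; ring
      rw [picone_eq p hp (hu x) (hu y) (hv x) (hv y) heq]
      simp
end
end
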